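/- Let f : [0,1] → ℝ be the piecewise linear function f(x) = 1.5x for 0 ≤ x ≤ 1/3, f(x) = 0.5 for 1/3 < x ≤ 2/3, and f(x) = 1.5x − 0.5 for 2/3 < x ≤ 1. Then for every n ≥ 1 and every δ with 2/3 < δ < 1, the n-th Bernstein polynomial of f satisfies B_nf(δ) > f(δ). -/

import Mathlib

open Filter Set MeasureTheory
open scoped ENNReal Topology

/-- `l` is a Λ-sequence (indexed from 0, so `l 0` plays the role of `λ₁`):
a nondecreasing sequence of positive reals whose reciprocals have divergent sum. -/
def IsLambdaSeq (l : ℕ → ℝ) : Prop :=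
  Monotone l ∧ (∀ n, 0 < l n) ∧ ¬ Summable (fun n => 1 / l n)

/-- A proper Λ-sequence: additionally `λₙ → ∞`. -/
def IsProperLambdaSeq (l : ℕ → ℝ) : Prop :=
  IsLambdaSeq l ∧ Tendsto l atTop atTop

/-- The Λ-variation of `f` computed over partition points taken from `K`:
the supremum of `∑ⱼ |f(x_{j+1}) - f(x_j)| / λ_{β(j)}` over all `m`, all nondecreasing
tuples `x₁ ≤ … ≤ x_{m+1}` of points of `K` and all permutations `β` of the gaps. -/
noncomputable def lamVarOn (l : ℕ → ℝ) (f : ℝ → ℝ) (K : Set ℝ) : ℝ≥0∞ :=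
  ⨆ (m : ℕ) (x : Fin (m + 1) → ℝ) (_ : Monotone x) (_ : ∀ j, x j ∈ K)
    (β : Equiv.Perm (Fin m)),
    ∑ j : Fin m, ENNReal.ofReal (|f (x j.succ) - f (x j.castSucc)| / l (β j))

/-- The Λ-variation of `f : [0,1] → ℝ`. -/
noncomputable def lamVar (l : ℕ → ℝ) (f : ℝ → ℝ) : ℝ≥0∞ :=
  lamVarOn l f (Set.Icc 0 1)

/-- The norm `‖f‖_Λ = V_Λ(f) + |f 0|` (valued in `[0,∞]`). -/
noncomputable def lamNorm (l : ℕ → ℝ) (f : ℝ → ℝ) : ℝ≥0∞ :=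
  lamVar l f + ENNReal.ofReal |f 0|

/-- `f` is continuous in Λ-variation: `V_{Λ_(m)}(f) → 0` as `m → ∞`. -/
def ContInLamVar (l : ℕ → ℝ) (f : ℝ → ℝ) : Prop :=
  Tendsto (fun m => lamVar (fun n => l (n + m)) f) atTop (𝓝 0)

/-- The restricted Λ-variation `V_{Λ,δ}(f)`: the supremum of `∑ⱼ |f(bⱼ) - f(aⱼ)| / λⱼ`
over all finite sequences of nonoverlapping closed subintervals `[aⱼ, bⱼ]` of `[0,1]`
of length at most `δ`, listed in any order. -/
noncomputable def lamVarDelta (l : ℕ → ℝ) (δ : ℝ) (f : ℝ → ℝ) : ℝ≥0∞ :=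
  ⨆ (k : ℕ) (a : Fin k → ℝ) (b : Fin k → ℝ)
    (_ : ∀ j, 0 ≤ a j ∧ a j ≤ b j ∧ b j ≤ 1 ∧ b j - a j ≤ δ)
    (_ : ∀ i j, i ≠ j → b i ≤ a j ∨ b j ≤ a i),
    ∑ j : Fin k, ENNReal.ofReal (|f (b j) - f (a j)| / l j)

/-- The `n`-th Bernstein polynomial of `f : [0,1] → ℝ`. -/
noncomputable def bern (n : ℕ) (f : ℝ → ℝ) (x : ℝ) : ℝ :=
  ∑ k ∈ Finset.range (n + 1),
    f ((k : ℝ) / n) * (n.choose k : ℝ) * x ^ k * (1 - x) ^ (n - k)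

/-- The `n`-th Kantorovich polynomial of `f : [0,1] → ℝ`. -/
noncomputable def kant (n : ℕ) (f : ℝ → ℝ) (x : ℝ) : ℝ :=
  ∑ k ∈ Finset.range (n + 1),
    (n.choose k : ℝ) * x ^ k * (1 - x) ^ (n - k) *
      ((n + 1) * ∫ t in ((k : ℝ) / (n + 1))..(((k : ℝ) + 1) / (n + 1)), f t)

/-- The piecewise linear function of the counterexample. -/
noncomputable def fex (x : ℝ) : ℝ :=
  if x ≤ 1 / 3 then 1.5 * x else if x ≤ 2 / 3 then 0.5 else 1.5 * x - 0.5

lemma sum_one_bern (n : ℕ) (x : ℝ) :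
    ∑ k ∈ Finset.range (n + 1), (n.choose k : ℝ) * x ^ k * (1 - x) ^ (n - k) = 1 := by
  have h := add_pow x (1 - x) n
  simp only [add_sub_cancel, one_pow] at h
  calc ∑ k ∈ Finset.range (n + 1), (n.choose k : ℝ) * x ^ k * (1 - x) ^ (n - k)
      = ∑ k ∈ Finset.range (n + 1), x ^ k * (1 - x) ^ (n - k) * (n.choose k : ℝ) :=
        Finset.sum_congr rfl fun k _ => by ring
    _ = 1 := h.symm

lemma sum_k_bern (n : ℕ) (x : ℝ) :
    ∑ k ∈ Finset.range (n + 1), (k : ℝ) * ((n.choose k : ℝ) * x ^ k * (1 - x) ^ (n - k))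
      = n * x := by
  have h := congrArg (Polynomial.eval x) (bernsteinPolynomial.sum_smul ℝ n)
  simp only [Polynomial.eval_finset_sum, Polynomial.eval_smul, bernsteinPolynomial,
    Polynomial.eval_mul, Polynomial.eval_pow, Polynomial.eval_natCast, Polynomial.eval_sub,
    Polynomial.eval_one, Polynomial.eval_X, nsmul_eq_mul] at h
  exact h

lemma fex_ge (t : ℝ) : fex t ≥ 1.5 * t - 0.5 := by
  unfold fex
  split_ifs with h1 h2 <;> norm_num <;> try linarith

/-- For every `n ≥ 1` and every `2/3 < δ < 1`, `B_n f(δ) > f(δ)`. -/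
theorem bernstein_fex_gt (n : ℕ) (hn : 1 ≤ n) (δ : ℝ) (hδ1 : 2 / 3 < δ) (hδ2 : δ < 1) :
    bern n fex δ > fex δ := by
  have hδ0 : 0 < δ := by linarith
  have h1δ : 0 < 1 - δ := by linarith
  have hfδ : fex δ = 1.5 * δ - 0.5 := by
    unfold fex
    rw [if_neg (by linarith), if_neg (by linarith)]
  have hg : bern n (fun t => 1.5 * t - 0.5) δ = 1.5 * δ - 0.5 := by
    unfold bern
    have e : ∀ k ∈ Finset.range (n + 1),
        (1.5 * ((k : ℝ) / n) - 0.5) * (n.choose k : ℝ) * δ ^ k * (1 - δ) ^ (n - k)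
        = (1.5 / n) * ((k : ℝ) * ((n.choose k : ℝ) * δ ^ k * (1 - δ) ^ (n - k)))
          - 0.5 * ((n.choose k : ℝ) * δ ^ k * (1 - δ) ^ (n - k)) := fun k _ => by ring
    rw [Finset.sum_congr rfl e, Finset.sum_sub_distrib, ← Finset.mul_sum, ← Finset.mul_sum,
      sum_k_bern, sum_one_bern]
    have hn' : (n : ℝ) ≠ 0 := Nat.cast_ne_zero.mpr (by omega)
    field_simp
  have key : bern n (fun t => 1.5 * t - 0.5) δ < bern n fex δ := by
    unfold bern
    apply Finset.sum_lt_sum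
    · intro k hk
      have hge := fex_ge ((k : ℝ) / n)
      have hp : (0:ℝ) < (n.choose k : ℝ) * δ ^ k * (1 - δ) ^ (n - k) := by
        have hc : (0:ℝ) < (n.choose k : ℝ) := by
          exact_mod_cast Nat.choose_pos (Nat.lt_succ_iff.mp (Finset.mem_range.mp hk))
        positivity
      nlinarith [hge, hp]
    · refine ⟨0, Finset.mem_range.mpr (by omega), ?_⟩
      simp [fex]
      nlinarith [pow_pos h1δ n]
  rw [hfδ, ← hg]
  exact key
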